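/- Let R be a fusion ring (a ℤ-algebra free as a ℤ-module with distinguished basis {Xᵢ} containing 1, nonnegative structure constants, and with involution * such that the coefficient of 1 in XᵢXⱼ equals 1 if Xⱼ = Xᵢ* and 0 otherwise), and let FPdim : R → ℝ be the ring homomorphism sending each basis element to its Frobenius–Perron dimension (FPdim(Xᵢ) > 0 for all i). Let A and C be based subrings of R whose basis intersection is {1}. Then for basis elements X ∈ A and Y ∈ C, the product XY is again a basis element of R, and XY = X'Y' for basis elements X' ∈ A, Y' ∈ C implies X = X' and Y = Y'. -/

import Mathlib

open Finset

/-- A fusion ring presented by its structure constants on a finite basis. -/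
structure FusionRingData (ι : Type*) [Fintype ι] [DecidableEq ι] where
  one : ι
  dual : ι → ι
  N : ι → ι → ι → ℕ
  assoc : ∀ i j k l, ∑ m : ι, N i j m * N m k l = ∑ m : ι, N j k m * N i m l
  one_mul : ∀ i j, N one i j = if j = i then 1 else 0
  mul_one : ∀ i j, N i one j = if j = i then 1 else 0
  dual_dual : ∀ i, dual (dual i) = i
  frob1 : ∀ i j k, N i j k = N (dual i) k j
  frob2 : ∀ i j k, N i j k = N k (dual j) i

/-- A based subring of a fusion ring: a subset of the basis containing the unit,
closed under duality and under taking constituents of products. -/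
structure BasedSubring {ι : Type*} [Fintype ι] [DecidableEq ι]
    (R : FusionRingData ι) where
  carrier : Finset ι
  one_mem : R.one ∈ carrier
  dual_mem : ∀ i ∈ carrier, R.dual i ∈ carrier
  mul_mem : ∀ i ∈ carrier, ∀ j ∈ carrier, ∀ k, R.N i j k ≠ 0 → k ∈ carrier

/-- `d` is the Frobenius–Perron dimension character: a ring homomorphism
on the Grothendieck ring, positive on basis elements. -/
def IsFPdim {ι : Type*} [Fintype ι] [DecidableEq ι]
    (R : FusionRingData ι) (d : ι → ℝ) : Prop :=
  (∀ i, 0 < d i) ∧ ∀ i j, d i * d j = ∑ k : ι, (R.N i j k : ℝ) * d k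



lemma key_pairing {ι : Type*} [Fintype ι] [DecidableEq ι] (R : FusionRingData ι)
    (A C : BasedSubring R) (hAC : A.carrier ∩ C.carrier = {R.one})
    {X Y X' Y' : ι} (hX : X ∈ A.carrier) (hY : Y ∈ C.carrier)
    (hX' : X' ∈ A.carrier) (hY' : Y' ∈ C.carrier) :
    ∑ k : ι, R.N X Y k * R.N X' Y' k = if X = X' ∧ Y = Y' then 1 else 0 := by
  have h1 : ∀ k, R.N X' Y' k = R.N (R.dual X') k Y' := fun k => R.frob1 X' Y' k
  have calc1 : ∑ k : ι, R.N X Y k * R.N X' Y' k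
      = ∑ m : ι, R.N (R.dual X') X m * R.N m Y Y' := by
    simp_rw [h1]
    exact (R.assoc (R.dual X') X Y Y').symm
  rw [calc1]
  rw [Finset.sum_eq_single R.one]
  · have e1 : R.N (R.dual X') X R.one = if R.dual X' = R.dual X then 1 else 0 := by
      rw [R.frob2 (R.dual X') X R.one, R.one_mul]
    have e2 : R.N R.one Y Y' = if Y' = Y then 1 else 0 := R.one_mul Y Y'
    rw [e1, e2]
    have hdual : (R.dual X' = R.dual X) ↔ (X = X') := by
      constructor
      · intro h
        have := congrArg R.dual h
        rw [R.dual_dual, R.dual_dual] at this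
        exact this.symm
      · intro h; rw [h]
    by_cases hxx : X = X' <;> by_cases hyy : Y = Y' <;>
      simp [hxx, hyy, hdual, eq_comm]
  · intro m _ hm
    by_contra hne
    obtain ⟨ha, hc⟩ := Nat.mul_ne_zero_iff.mp hne
    have hA : m ∈ A.carrier := A.mul_mem _ (A.dual_mem _ hX') _ hX _ ha
    have hC : m ∈ C.carrier := by
      have h2 : R.N Y' (R.dual Y) m = R.N m Y Y' := by
        have := R.frob2 Y' (R.dual Y) m
        rwa [R.dual_dual] at this
      exact C.mul_mem _ hY' _ (C.dual_mem _ hY) _ (by rw [h2]; exact hc)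
    have : m ∈ A.carrier ∩ C.carrier := Finset.mem_inter.mpr ⟨hA, hC⟩
    rw [hAC, Finset.mem_singleton] at this
    exact hm this
  · intro h
    exact absurd (Finset.mem_univ R.one) h

/-- If the bases of based subrings `A` and `C` of a fusion ring meet only in the
unit, then for basis elements `X ∈ A`, `Y ∈ C` the product `XY` is again a basis
element, and it determines `X` and `Y`. -/
theorem product_simple_and_determined
    {ι : Type*} [Fintype ι] [DecidableEq ι] (R : FusionRingData ι)
    (d : ι → ℝ) (hd : IsFPdim R d)
    (A C : BasedSubring R) (hAC : A.carrier ∩ C.carrier = {R.one}) :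
    (∀ X ∈ A.carrier, ∀ Y ∈ C.carrier,
        ∃ k : ι, ∀ m : ι, R.N X Y m = if m = k then 1 else 0) ∧
    (∀ X ∈ A.carrier, ∀ Y ∈ C.carrier, ∀ X' ∈ A.carrier, ∀ Y' ∈ C.carrier,
        ∀ k : ι, R.N X Y k ≠ 0 → R.N X' Y' k ≠ 0 → X = X' ∧ Y = Y') := by
  constructor
  · intro X hX Y hY
    have hs : ∑ k : ι, R.N X Y k * R.N X Y k = 1 := by
      rw [key_pairing R A C hAC hX hY hX hY, if_pos ⟨rfl, rfl⟩]
    obtain ⟨k, _, hk⟩ := Finset.exists_ne_zero_of_sum_ne_zero (by rw [hs]; exact one_ne_zero)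
    have hk1 : R.N X Y k = 1 := by
      have hle : R.N X Y k * R.N X Y k ≤ 1 := hs ▸ Finset.single_le_sum
        (f := fun m => R.N X Y m * R.N X Y m) (fun m _ => Nat.zero_le _) (Finset.mem_univ k)
      have hpos : 1 ≤ R.N X Y k := Nat.one_le_iff_ne_zero.mpr
        (fun h => hk (by simp [h]))
      nlinarith
    refine ⟨k, fun m => ?_⟩
    by_cases hmk : m = k
    · simpa [hmk] using hk1
    · simp only [if_neg hmk]
      have hsplit := Finset.add_sum_erase Finset.univ
        (fun m => R.N X Y m * R.N X Y m) (Finset.mem_univ k)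
      simp only [hk1, hs] at hsplit
      have hrest : ∑ m ∈ Finset.univ.erase k, R.N X Y m * R.N X Y m = 0 := by omega
      have := (Finset.sum_eq_zero_iff.mp hrest) m
        (Finset.mem_erase.mpr ⟨hmk, Finset.mem_univ m⟩)
      exact mul_eq_zero.mp this |>.elim id id
  · intro X hX Y hY X' hX' Y' hY' k hk hk'
    have hkey := key_pairing R A C hAC hX hY hX' hY'
    have hpos : 0 < ∑ m : ι, R.N X Y m * R.N X' Y' m := by
      apply Finset.sum_pos' (fun m _ => Nat.zero_le _)
      exact ⟨k, Finset.mem_univ k, Nat.pos_of_ne_zero (Nat.mul_ne_zero hk hk')⟩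
    rw [hkey] at hpos
    by_contra hcon
    rw [if_neg (fun h => hcon h)] at hpos
    exact lt_irrefl 0 hpos
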